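/- If a subminion of the minion of affine maps over Z_3 does not contain the binary element (2,2), then it equals exactly the minion of projections (the set of standard basis tuples e_i in each arity). -/

import Mathlib

/-- The minor of a coefficient tuple `α ∈ Z₃ⁿ` along `π : [n] → [m]`: coefficients
are summed over preimages. -/
def minorMap {n m : ℕ} (π : Fin n → Fin m) (α : Fin n → ZMod 3) : Fin m → ZMod 3 :=
  fun j => ∑ i ∈ Finset.univ.filter (fun i => π i = j), α i

lemma key_proj {n : ℕ} (α : Fin n → ZMod 3) (hsum : ∑ i, α i = 1)
    (hT : ∀ T : Finset (Fin n), ∑ i ∈ T, α i ≠ 2) :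
    ∃ i : Fin n, α = fun j => if j = i then (1 : ZMod 3) else 0 := by
  have h01 : ∀ i, α i = 0 ∨ α i = 1 := by
    intro i
    have h := hT {i}
    simp only [Finset.sum_singleton] at h
    revert h; generalize α i = x; revert x; decide
  set T := Finset.univ.filter (fun i => α i = 1) with hTdef
  have hsumT : ∑ i ∈ T, α i = T.card := by
    rw [Finset.sum_congr rfl (fun i hi => (Finset.mem_filter.mp hi).2)]
    simp
    rfl
  have hsplit : ∑ i, α i = ∑ i ∈ T, α i := by
    rw [← Finset.sum_filter_add_sum_filter_not Finset.univ (fun i => α i = 1)]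
    have h0 : ∑ i ∈ Finset.univ.filter (fun i => ¬ α i = 1), α i = 0 := by
      apply Finset.sum_eq_zero
      intro i hi
      rcases h01 i with h | h
      · exact h
      · exact absurd h (Finset.mem_filter.mp hi).2
    rw [h0, add_zero]
  have hcard : ((T.card : ℕ) : ZMod 3) = 1 := by rw [← hsumT, ← hsplit, hsum]
  have hle : T.card ≤ 1 := by
    by_contra h
    push_neg at h
    obtain ⟨i, hi, j, hj, hij⟩ := Finset.one_lt_card.mp h
    apply hT ({i, j} : Finset (Fin n))
    rw [Finset.sum_pair hij, (Finset.mem_filter.mp hi).2, (Finset.mem_filter.mp hj).2]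
    decide
  have hone : T.card = 1 := by
    interval_cases h : T.card
    · simp at hcard
    · rfl
  obtain ⟨i, hTi⟩ := Finset.card_eq_one.mp hone
  refine ⟨i, funext fun j => ?_⟩
  by_cases hji : j = i
  · subst hji
    have : j ∈ T := by rw [hTi]; exact Finset.mem_singleton_self j
    simpa using (Finset.mem_filter.mp this).2
  · have : j ∉ T := by rw [hTi]; simpa using hji
    rcases h01 j with h | h
    · simp [hji, h]
    · exact absurd (Finset.mem_filter.mpr ⟨Finset.mem_univ j, h⟩) this

/-- A subminion of the minion of affine maps over `Z₃` that does not contain the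
binary element `(2, 2)` is exactly the minion of projections. -/
theorem subminion_avoiding_22_is_projections (S : ∀ n : ℕ, Set (Fin n → ZMod 3))
    (haff : ∀ n, ∀ α ∈ S n, ∑ i, α i = 1)
    (hclosed : ∀ n m : ℕ, 1 ≤ n → 1 ≤ m → ∀ (π : Fin n → Fin m), ∀ α ∈ S n, minorMap π α ∈ S m)
    (hne : ∀ n : ℕ, 1 ≤ n → (S n).Nonempty)
    (h22 : (fun _ : Fin 2 => (2 : ZMod 3)) ∉ S 2) :
    ∀ n : ℕ, 1 ≤ n →
      S n = {α | ∃ i : Fin n, α = fun j => if j = i then (1 : ZMod 3) else 0} := by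
  intro n hn
  ext α
  simp only [Set.mem_setOf_eq]
  constructor
  · intro hα
    apply key_proj α (haff n α hα)
    intro T hT2
    set π : Fin n → Fin 2 := fun i => if i ∈ T then 0 else 1 with hπ
    have hmem := hclosed n 2 hn (by norm_num) π α hα
    have hf0 : Finset.univ.filter (fun i => π i = 0) = T := by
      ext k
      by_cases hk : k ∈ T <;> simp [hπ, hk]
    have heq : minorMap π α = fun _ => (2 : ZMod 3) := by
      funext j
      fin_cases j
      · show minorMap π α 0 = 2
        rw [minorMap, hf0, hT2]
      · show minorMap π α 1 = 2
        have hf1 : Finset.univ.filter (fun i => π i = 1) =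
            Finset.univ.filter (fun i => ¬ π i = 0) := by
          ext k; by_cases hk : k ∈ T <;> simp [hπ, hk]
        have hsplit := Finset.sum_filter_add_sum_filter_not Finset.univ
          (fun i => π i = 0) α
        rw [hf0, hT2, haff n α hα] at hsplit
        rw [minorMap, hf1]
        have h2 : ∑ i ∈ Finset.univ.filter (fun i => ¬ π i = 0), α i = 1 - 2 := by
          rw [← hsplit]; ring
        rw [h2]; decide
    rw [heq] at hmem
    exact h22 hmem
  · rintro ⟨i, rfl⟩
    obtain ⟨β, hβ⟩ := hne n hn
    have hmem := hclosed n n hn hn (fun _ => i) β hβ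
    have heq : minorMap (fun _ => i) β = fun j => if j = i then (1 : ZMod 3) else 0 := by
      funext j
      rw [minorMap]
      by_cases h : j = i
      · subst h
        simp [haff n β hβ]
      · have : Finset.univ.filter (fun _ : Fin n => i = j) = ∅ := by
          ext k; simp [Ne.symm h]
        simp [this, Ne.symm h, h]
    rwa [heq] at hmem
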